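/- Define u(n,k) as the number of partitions of [n] into an unordered set of noncrossing lists such that the list containing n has length k. Then u(n,k) = k! * sum over weak compositions (b_1,...,b_k) of n-k of u(b_1)...u(b_k), where u(m) = sum_j u(m,j) for m ≥ 1 and u(0) = 1. -/

import Mathlib

/-- Partitions of `[n]` into a set of noncrossing lists. -/
def SetOfNCLists (n : ℕ) : Type :=
  {S : Finset (List (Fin n)) // (∀ l ∈ S, l ≠ [] ∧ l.Nodup) ∧
    (∀ x : Fin n, ∃! l, l ∈ S ∧ x ∈ l) ∧
    ¬ ∃ a b c d : Fin n, a < b ∧ b < c ∧ c < d ∧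
      ∃ l₁ ∈ S, ∃ l₂ ∈ S, l₁ ≠ l₂ ∧ a ∈ l₁ ∧ c ∈ l₁ ∧ b ∈ l₂ ∧ d ∈ l₂}

/-- `u n` is the total number of partitions of `[n]` into sets of noncrossing
lists; `u 0 = 1`. -/
noncomputable def u (n : ℕ) : ℕ := Nat.card (SetOfNCLists n)

/-- `uk n k` counts those partitions of `[n]` into sets of noncrossing lists in
which the list containing the largest element has length `k` (here the ground set
is `Fin (n+1)`, representing `[n+1]`, with largest element `Fin.last n`). -/
noncomputable def uk (n k : ℕ) : ℕ :=
  Nat.card {S : SetOfNCLists (n + 1) //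
    ∃ l ∈ S.1, Fin.last n ∈ l ∧ l.length = k}

namespace UKRec

variable {k n : ℕ} (b : Fin k → ℕ)

/-- start of gap `i` -/
def off (i : Fin k) : ℕ := ∑ j ∈ Finset.univ.filter (fun j => j < i), (b j + 1)

lemma off_add_le (i : Fin k) : off b i + (b i + 1) ≤ ∑ j, (b j + 1) := by
  have h : insert i (Finset.univ.filter (fun j => j < i)) ⊆ Finset.univ := by
    intro x _; exact Finset.mem_univ x
  have hni : i ∉ Finset.univ.filter (fun j => j < i) := by simp
  calc off b i + (b i + 1) = ∑ j ∈ insert i (Finset.univ.filter (fun j => j < i)), (b j + 1) := by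
        rw [Finset.sum_insert hni, add_comm, off]
    _ ≤ ∑ j, (b j + 1) := Finset.sum_le_sum_of_subset h

lemma off_lt_off {i j : Fin k} (hij : i < j) : off b i + (b i + 1) ≤ off b j := by
  have h : insert i (Finset.univ.filter (fun x => x < i)) ⊆ Finset.univ.filter (fun x => x < j) := by
    intro x hx
    rcases Finset.mem_insert.1 hx with h | h
    · subst h; simp [hij]
    · simp only [Finset.mem_filter] at h ⊢
      exact ⟨Finset.mem_univ x, h.2.trans hij⟩
  have hni : i ∉ Finset.univ.filter (fun x => x < i) := by simp
  calc off b i + (b i + 1) = ∑ x ∈ insert i (Finset.univ.filter (fun x => x < i)), (b x + 1) := by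
        rw [Finset.sum_insert hni, add_comm, off]
    _ ≤ off b j := Finset.sum_le_sum_of_subset h

lemma off_last (hk : 0 < k) :
    off b ⟨k - 1, by omega⟩ + (b ⟨k - 1, by omega⟩ + 1) = ∑ j, (b j + 1) := by
  have hmem : (⟨k - 1, by omega⟩ : Fin k) ∈ Finset.univ := Finset.mem_univ _
  have hfe : Finset.univ.filter (fun j : Fin k => j < ⟨k - 1, by omega⟩) =
      Finset.univ.erase ⟨k - 1, by omega⟩ := by
    ext x
    simp only [Finset.mem_filter, Finset.mem_erase, Finset.mem_univ, true_and, and_true]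
    constructor
    · intro h; exact Fin.ne_of_lt h
    · intro h
      have := x.isLt
      exact Fin.lt_def.2 (by
        have : x.val ≠ k - 1 := fun hc => h (Fin.ext hc)
        simp only []
        omega)
  rw [off, hfe]
  exact Finset.sum_erase_add _ _ hmem


lemma off_zero (b : Fin k → ℕ) (hk : 0 < k) : off b ⟨0, hk⟩ = 0 := by
  rw [off]
  convert Finset.sum_empty
  ext j
  simp [Fin.lt_def]

lemma off_succ (b : Fin k → ℕ) (m : ℕ) (h : m + 1 < k) :
    off b ⟨m + 1, h⟩ = off b ⟨m, by omega⟩ + (b ⟨m, by omega⟩ + 1) := by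
  have hins : Finset.univ.filter (fun j : Fin k => j < ⟨m + 1, h⟩) =
      insert ⟨m, by omega⟩ (Finset.univ.filter (fun j : Fin k => j < ⟨m, by omega⟩)) := by
    ext j
    simp only [Finset.mem_filter, Finset.mem_insert, Finset.mem_univ, true_and, Fin.lt_def]
    constructor
    · intro hj
      rcases Nat.lt_succ_iff_lt_or_eq.1 hj with h1 | h1
      · exact Or.inr h1
      · exact Or.inl (Fin.ext h1)
    · rintro (rfl | hj)
      · simp
      · exact Nat.lt_succ_of_lt hj
  have hnm : (⟨m, by omega⟩ : Fin k) ∉ Finset.univ.filter (fun j : Fin k => j < ⟨m, by omega⟩) := by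
    simp
  rw [off, hins, Finset.sum_insert hnm, off, add_comm]

lemma off_congr {b₁ b₂ : Fin k → ℕ} {i : Fin k} (h : ∀ j, j < i → b₁ j = b₂ j) :
    off b₁ i = off b₂ i := by
  refine Finset.sum_congr rfl fun j hj => ?_
  rw [h j (Finset.mem_filter.1 hj).2]


variable (hN : ∑ j, (b j + 1) = n + 1)

/-- the `i`-th chosen element -/
def sElt (i : Fin k) : Fin (n + 1) :=
  ⟨off b i + b i, by have := off_add_le b i; omega⟩

/-- the `x`-th element of gap `i` -/
def gElt (i : Fin k) (x : Fin (b i)) : Fin (n + 1) :=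
  ⟨off b i + x, by have := off_add_le b i; have := x.isLt; omega⟩

lemma sElt_lt_sElt {i j : Fin k} : sElt b hN i < sElt b hN j ↔ i < j := by
  constructor
  · intro h
    by_contra hc
    rcases (not_lt.1 hc).lt_or_eq with h2 | h2
    · have := off_lt_off b h2
      simp only [sElt, Fin.lt_def] at h
      omega
    · subst h2; exact lt_irrefl _ h
  · intro h
    have := off_lt_off b h
    simp only [sElt, Fin.lt_def]
    omega

lemma gElt_lt_sElt {i j : Fin k} {x : Fin (b i)} : gElt b hN i x < sElt b hN j ↔ i ≤ j := by
  constructor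
  · intro h
    by_contra hc
    have h2 := off_lt_off b (not_le.1 hc)
    simp only [gElt, sElt, Fin.lt_def] at h
    omega
  · intro h
    rcases h.lt_or_eq with h2 | h2
    · have := off_lt_off b h2
      have := x.isLt
      simp only [gElt, sElt, Fin.lt_def]
      omega
    · subst h2
      have := x.isLt
      simp only [gElt, sElt, Fin.lt_def]
      omega

lemma sElt_lt_gElt {i j : Fin k} {y : Fin (b j)} : sElt b hN i < gElt b hN j y ↔ i < j := by
  constructor
  · intro h
    by_contra hc
    have h2 : j ≤ i := not_lt.1 hc
    rcases h2.lt_or_eq with h3 | h3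
    · have := off_lt_off b h3
      have := y.isLt
      simp only [gElt, sElt, Fin.lt_def] at h
      omega
    · subst h3
      have := y.isLt
      simp only [gElt, sElt, Fin.lt_def] at h
      omega
  · intro h
    have := off_lt_off b h
    simp only [gElt, sElt, Fin.lt_def]
    omega

lemma gElt_lt_gElt {i j : Fin k} {x : Fin (b i)} {y : Fin (b j)} :
    gElt b hN i x < gElt b hN j y ↔ i < j ∨ (i = j ∧ x.val < y.val) := by
  constructor
  · intro h
    rcases lt_trichotomy i j with h2 | h2 | h2
    · exact Or.inl h2
    · subst h2
      simp only [gElt, Fin.lt_def] at h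
      exact Or.inr ⟨rfl, by omega⟩
    · exfalso
      have := off_lt_off b h2
      have := x.isLt
      simp only [gElt, Fin.lt_def] at h
      omega
  · rintro (h | ⟨rfl, h⟩)
    · have h1 := off_lt_off b h
      have := x.isLt
      simp only [gElt, Fin.lt_def]
      omega
    · simp only [gElt, Fin.lt_def]
      omega

lemma gElt_ne_sElt {i j : Fin k} {x : Fin (b i)} : gElt b hN i x ≠ sElt b hN j := by
  rcases le_or_gt i j with h | h
  · exact ne_of_lt ((gElt_lt_sElt b hN).2 h)
  · exact ne_of_gt ((sElt_lt_gElt b hN).2 h)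

lemma sElt_injective : Function.Injective (sElt b hN) := by
  intro i j h
  by_contra hc
  rcases (lt_or_gt_of_ne hc) with h2 | h2
  · exact absurd h (ne_of_lt ((sElt_lt_sElt b hN).2 h2))
  · exact absurd h (ne_of_gt ((sElt_lt_sElt b hN).2 h2))

lemma gElt_inj {i j : Fin k} {x : Fin (b i)} {y : Fin (b j)}
    (h : gElt b hN i x = gElt b hN j y) : i = j ∧ x.val = y.val := by
  rcases lt_trichotomy i j with h2 | h2 | h2
  · exact absurd h (ne_of_lt ((gElt_lt_gElt b hN).2 (Or.inl h2)))
  · subst h2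
    refine ⟨rfl, ?_⟩
    by_contra hc
    rcases Nat.lt_or_ge x.val y.val with h3 | h3
    · exact absurd h (ne_of_lt ((gElt_lt_gElt b hN).2 (Or.inr ⟨rfl, h3⟩)))
    · exact absurd h (ne_of_gt ((gElt_lt_gElt b hN).2 (Or.inr ⟨rfl, by omega⟩)))
  · exact absurd h (ne_of_gt ((gElt_lt_gElt b hN).2 (Or.inl h2)))

/-- classification map -/
def fMap : (Σ i : Fin k, Fin (b i)) ⊕ Fin k → Fin (n + 1) :=
  Sum.elim (fun p => gElt b hN p.1 p.2) (sElt b hN)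

lemma fMap_bijective : Function.Bijective (fMap b hN) := by
  rw [Fintype.bijective_iff_injective_and_card]
  constructor
  · rintro (⟨i, x⟩ | i) (⟨j, y⟩ | j) h
    · obtain ⟨h1, h2⟩ := gElt_inj b hN h
      simp only at h1
      subst h1
      simp only at h2
      simp [Fin.ext h2]
    · exact absurd h (gElt_ne_sElt b hN)
    · exact absurd h.symm (gElt_ne_sElt b hN)
    · simp [sElt_injective b hN h]
  · simp only [Fintype.card_sum, Fintype.card_sigma, Fintype.card_fin]
    have : ∑ i, b i + k = ∑ j, (b j + 1) := by
      rw [Finset.sum_add_distrib]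
      simp
    omega

lemma fMap_surj (x : Fin (n + 1)) :
    (∃ i y, gElt b hN i y = x) ∨ ∃ i, sElt b hN i = x := by
  obtain ⟨c, hc⟩ := (fMap_bijective b hN).2 x
  rcases c with ⟨i, y⟩ | i
  · exact Or.inl ⟨i, y, hc⟩
  · exact Or.inr ⟨i, hc⟩

lemma sElt_eq_imp_b_eq {b₁ b₂ : Fin k → ℕ} (hN₁ : ∑ j, (b₁ j + 1) = n + 1)
    (hN₂ : ∑ j, (b₂ j + 1) = n + 1) (h : ∀ i, sElt b₁ hN₁ i = sElt b₂ hN₂ i) : b₁ = b₂ := by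
  have key : ∀ m, ∀ hm : m < k, b₁ ⟨m, hm⟩ = b₂ ⟨m, hm⟩ := by
    intro m
    induction m using Nat.strong_induction_on with
    | _ m IH =>
      intro hm
      have hoffe : off b₁ ⟨m, hm⟩ = off b₂ ⟨m, hm⟩ := by
        refine off_congr fun j hj => ?_
        have hj' : j.val < m := hj
        have := IH j.val hj' j.isLt
        simpa [Fin.eta] using this
      have hv := congrArg Fin.val (h ⟨m, hm⟩)
      simp only [sElt] at hv
      omega
  funext i
  have := key i.val i.isLt
  simpa [Fin.eta] using this

lemma sElt_last (hk : 0 < k) : sElt b hN ⟨k - 1, by omega⟩ = Fin.last n := by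
  have := off_last b hk
  simp only [sElt, Fin.last, Fin.ext_iff]
  omega


lemma gElt_injective (i : Fin k) : Function.Injective (gElt b hN i) := by
  intro x y h
  exact Fin.ext (gElt_inj b hN h).2

variable (σ : Equiv.Perm (Fin k)) (T : ∀ i, SetOfNCLists (b i))

noncomputable def Llist : List (Fin (n + 1)) := List.ofFn fun j => sElt b hN (σ j)

lemma mem_Llist {x : Fin (n + 1)} : x ∈ Llist b hN σ ↔ ∃ i, sElt b hN i = x := by
  rw [Llist, List.mem_ofFn]
  constructor
  · rintro ⟨j, rfl⟩; exact ⟨σ j, rfl⟩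
  · rintro ⟨i, rfl⟩; exact ⟨σ.symm i, by simp⟩

noncomputable def gapBlocks : Finset (List (Fin (n + 1))) :=
  Finset.univ.biUnion fun i => (T i).1.image (List.map (gElt b hN i))

lemma mem_gapBlocks {l : List (Fin (n + 1))} :
    l ∈ gapBlocks b hN T ↔ ∃ i, ∃ l' ∈ (T i).1, List.map (gElt b hN i) l' = l := by
  simp [gapBlocks, Finset.mem_biUnion, Finset.mem_image]

noncomputable def assembleS : Finset (List (Fin (n + 1))) := insert (Llist b hN σ) (gapBlocks b hN T)

lemma mem_assembleS {l : List (Fin (n + 1))} :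
    l ∈ assembleS b hN σ T ↔ l = Llist b hN σ ∨
      ∃ i, ∃ l' ∈ (T i).1, List.map (gElt b hN i) l' = l := by
  rw [assembleS, Finset.mem_insert, mem_gapBlocks]

lemma k_pos (hN : ∑ j, (b j + 1) = n + 1) : 0 < k := by
  rcases Nat.eq_zero_or_pos k with h | h
  · exfalso; subst h; simp at hN
  · exact h

lemma assemble_prop1 : ∀ l ∈ assembleS b hN σ T, l ≠ [] ∧ l.Nodup := by
  intro l hl
  rcases (mem_assembleS b hN σ T).1 hl with rfl | ⟨i, l', hl', rfl⟩
  · constructor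
    · have hl : (Llist b hN σ).length = k := by simp [Llist]
      have := k_pos b hN
      intro hc
      rw [hc] at hl
      simp at hl
      omega
    · rw [Llist, List.nodup_ofFn]
      exact (sElt_injective b hN).comp σ.injective
  · obtain ⟨hne, hnd⟩ := (T i).2.1 l' hl'
    exact ⟨by simpa using hne, hnd.map (gElt_injective b hN i)⟩

lemma assemble_prop2 : ∀ x : Fin (n + 1), ∃! l, l ∈ assembleS b hN σ T ∧ x ∈ l := by
  intro x
  rcases fMap_surj b hN x with ⟨i, y, rfl⟩ | ⟨i, rfl⟩
  · obtain ⟨l', ⟨hl'm, hyl'⟩, huniq⟩ := (T i).2.2.1 y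
    refine ⟨List.map (gElt b hN i) l', ⟨?_, List.mem_map_of_mem hyl'⟩, ?_⟩
    · exact (mem_assembleS b hN σ T).2 (Or.inr ⟨i, l', hl'm, rfl⟩)
    · rintro l ⟨hlm, hxl⟩
      rcases (mem_assembleS b hN σ T).1 hlm with rfl | ⟨i', l'', hl'', rfl⟩
      · exfalso
        obtain ⟨j, hj⟩ := (mem_Llist b hN σ).1 hxl
        exact gElt_ne_sElt b hN hj.symm
      · obtain ⟨y', hy'm, hy'⟩ := List.mem_map.1 hxl
        obtain ⟨hii, hyy⟩ := gElt_inj b hN hy'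
        subst hii
        have : y' = y := Fin.ext hyy
        subst this
        rw [huniq l'' ⟨hl'', hy'm⟩]
  · refine ⟨Llist b hN σ, ⟨Finset.mem_insert_self _ _, (mem_Llist b hN σ).2 ⟨i, rfl⟩⟩, ?_⟩
    rintro l ⟨hlm, hxl⟩
    rcases (mem_assembleS b hN σ T).1 hlm with rfl | ⟨i', l'', hl'', rfl⟩
    · rfl
    · exfalso
      obtain ⟨y', _, hy'⟩ := List.mem_map.1 hxl
      exact gElt_ne_sElt b hN hy'

lemma assemble_prop3 : ¬ ∃ p q r s : Fin (n + 1), p < q ∧ q < r ∧ r < s ∧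
    ∃ l₁ ∈ assembleS b hN σ T, ∃ l₂ ∈ assembleS b hN σ T, l₁ ≠ l₂ ∧
      p ∈ l₁ ∧ r ∈ l₁ ∧ q ∈ l₂ ∧ s ∈ l₂ := by
  rintro ⟨p, q, r, s, hpq, hqr, hrs, l₁, hl₁, l₂, hl₂, hne, hp, hr, hq, hs⟩
  rcases (mem_assembleS b hN σ T).1 hl₁ with rfl | ⟨i, l₁', hl₁', rfl⟩ <;>
    rcases (mem_assembleS b hN σ T).1 hl₂ with h2 | ⟨i', l₂', hl₂', rfl⟩
  · exact hne h2.symm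
  · -- l₁ = Llist, l₂ gap i'
    obtain ⟨jp, hjp⟩ := (mem_Llist b hN σ).1 hp
    obtain ⟨jr, hjr⟩ := (mem_Llist b hN σ).1 hr
    obtain ⟨yq, _, hyq⟩ := List.mem_map.1 hq
    obtain ⟨ys, _, hys⟩ := List.mem_map.1 hs
    subst hjp; subst hjr; subst hyq; subst hys
    have h1 : jp < i' := (sElt_lt_gElt b hN).1 hpq
    have h2 : i' ≤ jr := (gElt_lt_sElt b hN).1 hqr
    have h3 : jr < i' := (sElt_lt_gElt b hN).1 hrs
    exact absurd (h2.trans_lt h3) (lt_irrefl i')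
  · -- l₁ gap i, l₂ = Llist
    subst h2
    obtain ⟨yp, _, hyp⟩ := List.mem_map.1 hp
    obtain ⟨yr, _, hyr⟩ := List.mem_map.1 hr
    obtain ⟨jq, hjq⟩ := (mem_Llist b hN σ).1 hq
    subst hyp; subst hyr; subst hjq
    have h1 : i ≤ jq := (gElt_lt_sElt b hN).1 hpq
    have h2 : jq < i := (sElt_lt_gElt b hN).1 hqr
    exact absurd (h1.trans_lt h2) (lt_irrefl i)
  · -- both gaps
    obtain ⟨yp, hypm, hyp⟩ := List.mem_map.1 hp
    obtain ⟨yr, hyrm, hyr⟩ := List.mem_map.1 hr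
    obtain ⟨yq, hyqm, hyq⟩ := List.mem_map.1 hq
    obtain ⟨ys, hysm, hys⟩ := List.mem_map.1 hs
    subst hyp; subst hyr; subst hyq; subst hys
    have h1 : i ≤ i' := by
      rcases (gElt_lt_gElt b hN).1 hpq with h | ⟨h, _⟩
      · exact h.le
      · exact h.le
    have h2 : i' ≤ i := by
      rcases (gElt_lt_gElt b hN).1 hqr with h | ⟨h, _⟩
      · exact h.le
      · exact h.le
    have hii : i = i' := le_antisymm h1 h2
    subst hii
    have e1 : yp.val < yq.val := by
      rcases (gElt_lt_gElt b hN).1 hpq with h | ⟨_, h⟩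
      · exact absurd h (lt_irrefl i)
      · exact h
    have e2 : yq.val < yr.val := by
      rcases (gElt_lt_gElt b hN).1 hqr with h | ⟨_, h⟩
      · exact absurd h (lt_irrefl i)
      · exact h
    have e3 : yr.val < ys.val := by
      rcases (gElt_lt_gElt b hN).1 hrs with h | ⟨_, h⟩
      · exact absurd h (lt_irrefl i)
      · exact h
    refine (T i).2.2.2 ⟨yp, yq, yr, ys, e1, e2, e3, l₁', hl₁', l₂', hl₂', ?_, hypm, hyrm, hyqm, hysm⟩
    rintro rfl
    exact hne rfl

noncomputable def assemble : SetOfNCLists (n + 1) :=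
  ⟨assembleS b hN σ T, assemble_prop1 b hN σ T, assemble_prop2 b hN σ T,
    assemble_prop3 b hN σ T⟩

lemma assemble_spec : ∃ l ∈ (assemble b hN σ T).1, Fin.last n ∈ l ∧ l.length = k := by
  have hk := k_pos b hN
  exact ⟨Llist b hN σ, Finset.mem_insert_self _ _,
    (mem_Llist b hN σ).2 ⟨⟨k - 1, by omega⟩, sElt_last b hN hk⟩, by simp [Llist]⟩

lemma map_ne_Llist {i : Fin k} {l' : List (Fin (b i))} (h : l' ≠ []) :
    List.map (gElt b hN i) l' ≠ Llist b hN σ := by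
  intro hc
  have hx : gElt b hN i (l'.head h) ∈ Llist b hN σ := by
    rw [← hc]; exact List.mem_map_of_mem (List.head_mem h)
  obtain ⟨j, hj⟩ := (mem_Llist b hN σ).1 hx
  exact gElt_ne_sElt b hN hj.symm

lemma mem_T_iff {i : Fin k} {l' : List (Fin (b i))} :
    l' ∈ (T i).1 ↔ (List.map (gElt b hN i) l' ∈ assembleS b hN σ T ∧
      List.map (gElt b hN i) l' ≠ Llist b hN σ) := by
  constructor
  · intro h
    have hne := ((T i).2.1 l' h).1
    exact ⟨(mem_assembleS b hN σ T).2 (Or.inr ⟨i, l', h, rfl⟩), map_ne_Llist b hN σ hne⟩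
  · rintro ⟨hm, hne⟩
    rcases (mem_assembleS b hN σ T).1 hm with h | ⟨i'', l'', hl'', heq⟩
    · exact absurd h hne
    · have hl'ne : l' ≠ [] := by
        rintro rfl
        simp only [List.map_nil] at heq
        exact ((T i'').2.1 l'' hl'').1 (List.map_eq_nil_iff.1 heq)
    
      have hx : gElt b hN i (l'.head hl'ne) ∈ List.map (gElt b hN i'') l'' := by
        rw [heq]; exact List.mem_map_of_mem (List.head_mem hl'ne)
      obtain ⟨y'', hy''m, hy''⟩ := List.mem_map.1 hx
      obtain ⟨hii, -⟩ := gElt_inj b hN hy''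
      subst hii
      have : l'' = l' := List.map_injective_iff.2 (gElt_injective b hN i'') heq
      subst this
      exact hl''

section decompose

lemma block_in_gap {k n : ℕ} {b : Fin k → ℕ} (hN : ∑ j, (b j + 1) = n + 1)
    (S : SetOfNCLists (n + 1)) {L : List (Fin (n + 1))} (hLS : L ∈ S.1)
    (hmemL : ∀ i, sElt b hN i ∈ L) {l : List (Fin (n + 1))} (hl : l ∈ S.1) (hne : l ≠ L) :
    ∃ i, ∀ x ∈ l, ∃ y : Fin (b i), gElt b hN i y = x := by
  have hkpos : 0 < k := k_pos b hN
  have hA : ∀ x ∈ l, ∃ i y, gElt b hN i y = x := by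
    intro x hx
    rcases fMap_surj b hN x with h | ⟨i, hi⟩
    · exact h
    · exact absurd ((S.2.2.1 x).unique ⟨hl, hx⟩ ⟨hLS, hi ▸ hmemL i⟩) hne
  obtain ⟨x₀, hx₀⟩ := List.exists_mem_of_ne_nil l ((S.2.1 l hl).1)
  obtain ⟨i₀, y₀, hy₀⟩ := hA x₀ hx₀
  refine ⟨i₀, fun x hx => ?_⟩
  obtain ⟨i, y, hy⟩ := hA x hx
  rcases lt_trichotomy i i₀ with hlt | heq | hgt
  · exact absurd ⟨gElt b hN i y, sElt b hN i, gElt b hN i₀ y₀, sElt b hN ⟨k - 1, by omega⟩,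
      (gElt_lt_sElt b hN).2 le_rfl, (sElt_lt_gElt b hN).2 hlt,
      (gElt_lt_sElt b hN).2 (Fin.le_def.2 (by have := i₀.isLt; show i₀.val ≤ k - 1; omega)),
      l, hl, L, hLS, hne, hy ▸ hx, hy₀ ▸ hx₀, hmemL i, hmemL _⟩ S.2.2.2
  · subst heq; exact ⟨y, hy⟩
  · exact absurd ⟨gElt b hN i₀ y₀, sElt b hN i₀, gElt b hN i y, sElt b hN ⟨k - 1, by omega⟩,
      (gElt_lt_sElt b hN).2 le_rfl, (sElt_lt_gElt b hN).2 hgt,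
      (gElt_lt_sElt b hN).2 (Fin.le_def.2 (by have := i.isLt; show i.val ≤ k - 1; omega)),
      l, hl, L, hLS, hne, hy₀ ▸ hx₀, hy ▸ hx, hmemL i₀, hmemL _⟩ S.2.2.2

open Classical in
noncomputable def pull {k n : ℕ} (b : Fin k → ℕ) (hN : ∑ j, (b j + 1) = n + 1) (i : Fin k)
    (l : List (Fin (n + 1))) : List (Fin (b i)) :=
  if hl : ∀ x ∈ l, ∃ y : Fin (b i), gElt b hN i y = x then
    l.attach.map (fun x => (hl x.1 x.2).choose) else []

lemma map_pull {k n : ℕ} {b : Fin k → ℕ} {hN : ∑ j, (b j + 1) = n + 1} {i : Fin k}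
    {l : List (Fin (n + 1))} (hl : ∀ x ∈ l, ∃ y : Fin (b i), gElt b hN i y = x) :
    List.map (gElt b hN i) (pull b hN i l) = l := by
  rw [pull, dif_pos hl, List.map_map]
  have h : ∀ x ∈ l.attach, (gElt b hN i ∘ fun x : {x // x ∈ l} => (hl x.1 x.2).choose) x = x.1 :=
    fun x _ => (hl x.1 x.2).choose_spec
  rw [List.map_congr_left h, List.attach_map_subtype_val]

open Classical in
noncomputable def TiF {k n : ℕ} (b : Fin k → ℕ) (hN : ∑ j, (b j + 1) = n + 1)
    (S : SetOfNCLists (n + 1)) (L : List (Fin (n + 1))) (i : Fin k) :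
    Finset (List (Fin (b i))) :=
  ((S.1.erase L).filter (fun l => ∀ x ∈ l, ∃ y : Fin (b i), gElt b hN i y = x)).image
    (pull b hN i)

lemma mem_TiF {k n : ℕ} {b : Fin k → ℕ} {hN : ∑ j, (b j + 1) = n + 1}
    {S : SetOfNCLists (n + 1)} {L : List (Fin (n + 1))} {i : Fin k}
    {l' : List (Fin (b i))} :
    l' ∈ TiF b hN S L i ↔ List.map (gElt b hN i) l' ∈ S.1.erase L := by
  classical
  constructor
  · rw [TiF]
    intro h
    obtain ⟨l, hl, rfl⟩ := Finset.mem_image.1 h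
    obtain ⟨hlm, hcond⟩ := Finset.mem_filter.1 hl
    rw [map_pull hcond]
    exact hlm
  · intro h
    rw [TiF]
    refine Finset.mem_image.2 ⟨List.map (gElt b hN i) l', Finset.mem_filter.2 ⟨h, ?_⟩, ?_⟩
    · intro x hx
      obtain ⟨y, _, rfl⟩ := List.mem_map.1 hx
      exact ⟨y, rfl⟩
    · apply List.map_injective_iff.2 (gElt_injective b hN i)
      rw [map_pull]
      intro x hx
      obtain ⟨y, _, rfl⟩ := List.mem_map.1 hx
      exact ⟨y, rfl⟩

noncomputable def TiS {k n : ℕ} (b : Fin k → ℕ) (hN : ∑ j, (b j + 1) = n + 1)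
    (S : SetOfNCLists (n + 1)) (L : List (Fin (n + 1))) (hLS : L ∈ S.1)
    (hmemL : ∀ i, sElt b hN i ∈ L) (hLonly : ∀ x ∈ L, ∃ j, sElt b hN j = x) :
    ∀ i, SetOfNCLists (b i) := fun i =>
  ⟨TiF b hN S L i, by
    -- property 1
    intro l' hl'
    have h := Finset.mem_of_mem_erase (mem_TiF.1 hl')
    obtain ⟨h1, h2⟩ := S.2.1 _ h
    refine ⟨fun hc => h1 (by rw [hc, List.map_nil]), h2.of_map _⟩, by
    -- property 2
    intro y
    obtain ⟨l, ⟨hlS, hxl⟩, huniq⟩ := S.2.2.1 (gElt b hN i y)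
    have hlneL : l ≠ L := by
      rintro rfl
      obtain ⟨j, hj⟩ := hLonly _ hxl
      exact gElt_ne_sElt b hN hj.symm
    obtain ⟨i', hi'⟩ := block_in_gap hN S hLS hmemL hlS hlneL
    obtain ⟨y', hy'⟩ := hi' _ hxl
    obtain ⟨hii, -⟩ := gElt_inj b hN hy'
    subst hii
    have hcond := hi'
    have hlmem : l ∈ S.1.erase L := Finset.mem_erase.2 ⟨hlneL, hlS⟩
    refine ⟨pull b hN i' l, ⟨mem_TiF.2 (by rw [map_pull hcond]; exact hlmem), ?_⟩, ?_⟩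
    · have hxl' := hxl
      rw [← map_pull hcond] at hxl'
      obtain ⟨y₂, hy₂m, hy₂⟩ := List.mem_map.1 hxl'
      have : y₂ = y := gElt_injective b hN i' hy₂
      exact this ▸ hy₂m
    · rintro l'' ⟨hl''m, hyl''⟩
      have h := Finset.mem_of_mem_erase (mem_TiF.1 hl''m)
      have heq : List.map (gElt b hN i') l'' = l :=
        huniq _ ⟨h, List.mem_map_of_mem hyl''⟩
      apply List.map_injective_iff.2 (gElt_injective b hN i')
      rw [heq, map_pull hcond], by
    -- property 3
    rintro ⟨p, q, r, s, h1, h2, h3, l₁', hm₁, l₂', hm₂, hne', hp, hr, hq, hs⟩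
    refine S.2.2.2 ⟨gElt b hN i p, gElt b hN i q, gElt b hN i r, gElt b hN i s,
      (gElt_lt_gElt b hN).2 (Or.inr ⟨rfl, h1⟩), (gElt_lt_gElt b hN).2 (Or.inr ⟨rfl, h2⟩),
      (gElt_lt_gElt b hN).2 (Or.inr ⟨rfl, h3⟩),
      List.map (gElt b hN i) l₁', Finset.mem_of_mem_erase (mem_TiF.1 hm₁),
      List.map (gElt b hN i) l₂', Finset.mem_of_mem_erase (mem_TiF.1 hm₂),
      fun hc => hne' (List.map_injective_iff.2 (gElt_injective b hN i) hc),
      List.mem_map_of_mem hp, List.mem_map_of_mem hr,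
      List.mem_map_of_mem hq, List.mem_map_of_mem hs⟩⟩

lemma exists_perm {k n : ℕ} {b : Fin k → ℕ} (hN : ∑ j, (b j + 1) = n + 1)
    {L : List (Fin (n + 1))} (hnd : L.Nodup) (hlen : L.length = k)
    (hLonly : ∀ x ∈ L, ∃ j, sElt b hN j = x) :
    ∃ σ : Equiv.Perm (Fin k), Llist b hN σ = L := by
  have hg : ∀ j : Fin k, ∃ i, sElt b hN i = L.get (Fin.cast hlen.symm j) :=
    fun j => hLonly _ (List.get_mem L _)
  have hgspec : ∀ j, sElt b hN ((hg j).choose) = L.get (Fin.cast hlen.symm j) :=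
    fun j => (hg j).choose_spec
  have hginj : Function.Injective (fun j => (hg j).choose) := by
    intro j j' h
    have h' : (hg j).choose = (hg j').choose := h
    have h2 : L.get (Fin.cast hlen.symm j) = L.get (Fin.cast hlen.symm j') := by
      rw [← hgspec j, ← hgspec j', h']
    have h3 := List.nodup_iff_injective_get.1 hnd h2
    have h4 := congrArg Fin.val h3
    exact Fin.ext h4
  refine ⟨Equiv.ofBijective _ (Finite.injective_iff_bijective.1 hginj), ?_⟩
  refine List.ext_get (by simp [Llist, hlen]) ?_
  intro m hm1 hm2
  simp only [Llist, List.get_ofFn, Equiv.ofBijective_apply]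
  exact (hgspec _).trans (congrArg L.get (Fin.ext rfl))

lemma assembleS_eq {k n : ℕ} {b : Fin k → ℕ} (hN : ∑ j, (b j + 1) = n + 1)
    (S : SetOfNCLists (n + 1)) (L : List (Fin (n + 1))) (hLS : L ∈ S.1)
    (hmemL : ∀ i, sElt b hN i ∈ L) (hLonly : ∀ x ∈ L, ∃ j, sElt b hN j = x)
    (σ : Equiv.Perm (Fin k)) (hσ : Llist b hN σ = L) :
    assembleS b hN σ (TiS b hN S L hLS hmemL hLonly) = S.1 := by
  ext l
  rw [mem_assembleS]
  constructor
  · rintro (rfl | ⟨i, l', hl', rfl⟩)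
    · rw [hσ]; exact hLS
    · exact Finset.mem_of_mem_erase (mem_TiF.1 hl')
  · intro hl
    by_cases hc : l = L
    · subst hc; exact Or.inl hσ.symm
    · obtain ⟨i, hi⟩ := block_in_gap hN S hLS hmemL hl hc
      exact Or.inr ⟨i, pull b hN i l,
        mem_TiF.2 (by rw [map_pull hi]; exact Finset.mem_erase.2 ⟨hc, hl⟩), map_pull hi⟩

end decompose

end UKRec

namespace UKRec


section extract

variable {k n : ℕ}
variable {L : List (Fin (n + 1))} (hcard : L.toFinset.card = k)

/-- sorted enumeration of the elements of `L` -/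
noncomputable def svF : Fin k → Fin (n + 1) := fun i => (L.toFinset.orderIsoOfFin hcard i : Fin (n + 1))

lemma svF_mono : StrictMono (svF hcard) := fun i j h => by
  have := (L.toFinset.orderIsoOfFin hcard).strictMono h
  exact this

lemma svF_mem (i : Fin k) : svF hcard i ∈ L :=
  List.mem_toFinset.1 (L.toFinset.orderIsoOfFin hcard i).2

lemma svF_surj {x : Fin (n + 1)} (hx : x ∈ L) : ∃ i, svF hcard i = x := by
  obtain ⟨i, hi⟩ := (L.toFinset.orderIsoOfFin hcard).surjective ⟨x, List.mem_toFinset.2 hx⟩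
  exact ⟨i, congrArg Subtype.val hi⟩

/-- gap sizes derived from `L` -/
noncomputable def bF : Fin k → ℕ := fun i =>
  if (i : ℕ) = 0 then (svF hcard i).val
  else (svF hcard i).val - (svF hcard ⟨i.val - 1, by have := i.isLt; omega⟩).val - 1

lemma off_bF_add (i : Fin k) : off (bF hcard) i + bF hcard i = (svF hcard i).val := by
  obtain ⟨m, hm⟩ := i
  induction m with
  | zero =>
    rw [off_zero (bF hcard) (by omega), bF]
    simp
  | succ m IH =>
    have hm' : m < k := by omega
    have hlt : (svF hcard ⟨m, hm'⟩).val < (svF hcard ⟨m + 1, hm⟩).val :=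
      svF_mono hcard (by simp [Fin.lt_def])
    have hIH := IH hm'
    rw [off_succ (bF hcard) m hm]
    have hb : bF hcard ⟨m + 1, hm⟩ =
        (svF hcard ⟨m + 1, hm⟩).val - (svF hcard ⟨m, hm'⟩).val - 1 := by
      rw [bF]
      simp
    rw [hb]
    omega

lemma svF_last (hk : 0 < k) (hlast : Fin.last n ∈ L) :
    svF hcard ⟨k - 1, by omega⟩ = Fin.last n := by
  obtain ⟨i, hi⟩ := svF_surj hcard hlast
  have h1 : svF hcard i ≤ svF hcard ⟨k - 1, by omega⟩ := by
    rcases eq_or_lt_of_le (show i ≤ ⟨k - 1, by omega⟩ from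
      Fin.le_def.2 (by have := i.isLt; simp; omega)) with h | h
    · rw [h]
    · exact le_of_lt (svF_mono hcard h)
  have h2 : svF hcard ⟨k - 1, by omega⟩ ≤ Fin.last n := Fin.le_last _
  rw [hi] at h1
  exact le_antisymm h2 h1

lemma bF_sum (hk : 0 < k) (hlast : Fin.last n ∈ L) :
    ∑ j, (bF hcard j + 1) = n + 1 := by
  have h1 := off_last (bF hcard) hk
  have h2 := off_bF_add hcard ⟨k - 1, by omega⟩
  have h3 := congrArg Fin.val (svF_last hcard hk hlast)
  simp only [Fin.val_last] at h3
  omega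

lemma sElt_eq_svF (hk : 0 < k) (hlast : Fin.last n ∈ L) (i : Fin k) :
    sElt (bF hcard) (bF_sum hcard hk hlast) i = svF hcard i := by
  apply Fin.ext
  exact off_bF_add hcard i

end extract

end UKRec

namespace UKRec

instance instFiniteNC (m : ℕ) : Finite (SetOfNCLists m) := by
  have hlen : ∀ (S : SetOfNCLists m) (l : List (Fin m)), l ∈ S.1 → l.length ≤ m :=
    fun S l hl => by
      have h := (S.2.1 l hl).2
      simpa using h.length_le_card
  have hinj : Function.Injective
      (fun S : SetOfNCLists m => ({l | l.1 ∈ S.1} : Set {l : List (Fin m) // l.length ≤ m})) := by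
    intro S₁ S₂ h
    apply Subtype.ext
    ext l
    constructor
    · intro hl
      exact (Set.ext_iff.1 h ⟨l, hlen S₁ l hl⟩).1 hl
    · intro hl
      exact (Set.ext_iff.1 h ⟨l, hlen S₂ l hl⟩).2 hl
  haveI : Finite {l : List (Fin m) // l.length ≤ m} := (List.finite_length_le (Fin m) m).to_subtype
  exact Finite.of_injective _ hinj

lemma hN_of_mem {n k : ℕ} (hkn : k ≤ n + 1) {b : Fin k → ℕ}
    (hb : b ∈ Finset.Nat.antidiagonalTuple k (n + 1 - k)) : ∑ j, (b j + 1) = n + 1 := by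
  have h := Finset.Nat.mem_antidiagonalTuple.1 hb
  rw [Finset.sum_add_distrib]
  simp only [Finset.sum_const, Finset.card_univ, Fintype.card_fin, smul_eq_mul, mul_one]
  omega

noncomputable def Fmap {n k : ℕ} (hkn : k ≤ n + 1)
    (p : Σ b : {b : Fin k → ℕ // b ∈ Finset.Nat.antidiagonalTuple k (n + 1 - k)},
      Equiv.Perm (Fin k) × ∀ i, SetOfNCLists (b.1 i)) :
    {S : SetOfNCLists (n + 1) // ∃ l ∈ S.1, Fin.last n ∈ l ∧ l.length = k} :=
  ⟨assemble p.1.1 (hN_of_mem hkn p.1.2) p.2.1 p.2.2,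
    assemble_spec p.1.1 (hN_of_mem hkn p.1.2) p.2.1 p.2.2⟩

lemma Fmap_inj {n k : ℕ} (hkn : k ≤ n + 1) : Function.Injective (Fmap (n := n) (k := k) hkn) := by
  rintro ⟨⟨b₁, hb₁⟩, σ₁, T₁⟩ ⟨⟨b₂, hb₂⟩, σ₂, T₂⟩ h
  have hN₁ : ∑ j, (b₁ j + 1) = n + 1 := hN_of_mem hkn hb₁
  have hN₂ : ∑ j, (b₂ j + 1) = n + 1 := hN_of_mem hkn hb₂
  have hE : assembleS b₁ hN₁ σ₁ T₁ = assembleS b₂ hN₂ σ₂ T₂ := congrArg (fun x => x.1.1) h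
  have hkpos : 0 < k := k_pos b₁ hN₁
  have hL1mem : Fin.last n ∈ Llist b₁ hN₁ σ₁ :=
    (mem_Llist b₁ hN₁ σ₁).2 ⟨⟨k - 1, by omega⟩, sElt_last b₁ hN₁ hkpos⟩
  have hL2mem : Fin.last n ∈ Llist b₂ hN₂ σ₂ :=
    (mem_Llist b₂ hN₂ σ₂).2 ⟨⟨k - 1, by omega⟩, sElt_last b₂ hN₂ hkpos⟩
  have hLL : Llist b₁ hN₁ σ₁ = Llist b₂ hN₂ σ₂ := by
    have h1 : Llist b₁ hN₁ σ₁ ∈ assembleS b₂ hN₂ σ₂ T₂ := hE ▸ Finset.mem_insert_self _ _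
    exact (assemble_prop2 b₂ hN₂ σ₂ T₂ (Fin.last n)).unique ⟨h1, hL1mem⟩
      ⟨Finset.mem_insert_self _ _, hL2mem⟩
  have hse : ∀ i, sElt b₁ hN₁ i = sElt b₂ hN₂ i := by
    have hr : Set.range (sElt b₁ hN₁) = Set.range (sElt b₂ hN₂) := by
      ext x
      simp only [Set.mem_range]
      constructor
      · rintro ⟨i, rfl⟩
        exact (mem_Llist b₂ hN₂ σ₂).1 (hLL ▸ (mem_Llist b₁ hN₁ σ₁).2 ⟨i, rfl⟩)
      · rintro ⟨i, rfl⟩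
        exact (mem_Llist b₁ hN₁ σ₁).1 (hLL.symm ▸ (mem_Llist b₂ hN₂ σ₂).2 ⟨i, rfl⟩)
    have hm₁ : StrictMono (sElt b₁ hN₁) := fun i j hij => (sElt_lt_sElt b₁ hN₁).2 hij
    have hm₂ : StrictMono (sElt b₂ hN₂) := fun i j hij => (sElt_lt_sElt b₂ hN₂).2 hij
    haveI hwf : WellFoundedLT (Fin k) := inferInstance
    exact fun i => congrFun ((hm₁.range_inj hm₂).1 hr) i
  have hbeq : b₁ = b₂ := sElt_eq_imp_b_eq hN₁ hN₂ hse
  subst hbeq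
  have hLL' : Llist b₁ hN₁ σ₁ = Llist b₁ hN₁ σ₂ := hLL
  have hσ : σ₁ = σ₂ := by
    apply Equiv.ext
    intro j
    have hfun := congrFun (List.ofFn_injective hLL') j
    exact sElt_injective b₁ hN₁ hfun
  subst hσ
  have hE' : assembleS b₁ hN₁ σ₁ T₁ = assembleS b₁ hN₁ σ₁ T₂ := hE
  have hT : T₁ = T₂ := by
    funext i
    apply Subtype.ext
    ext l'
    rw [show ((T₁ i).1 : Finset (List (Fin (b₁ i)))) = (T₁ i).1 from rfl]
    rw [mem_T_iff b₁ hN₁ σ₁ T₁, mem_T_iff b₁ hN₁ σ₁ T₂, hE']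
  subst hT
  rfl

lemma Fmap_surj {n k : ℕ} (hk : 1 ≤ k) (hkn : k ≤ n + 1) :
    Function.Surjective (Fmap (n := n) (k := k) hkn) := by
  rintro ⟨S, hS⟩
  obtain ⟨L, hLS, hlast, hlen⟩ := hS
  have hnd : L.Nodup := (S.2.1 L hLS).2
  have hcard : L.toFinset.card = k := by rw [List.toFinset_card_of_nodup hnd, hlen]
  have hk0 : 0 < k := hk
  have hNb : ∑ j, (bF hcard j + 1) = n + 1 := bF_sum hcard hk0 hlast
  have hmemL : ∀ i, sElt (bF hcard) hNb i ∈ L := fun i => by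
    rw [sElt_eq_svF hcard hk0 hlast i]; exact svF_mem hcard i
  have hLonly : ∀ x ∈ L, ∃ j, sElt (bF hcard) hNb j = x := fun x hx => by
    obtain ⟨i, hi⟩ := svF_surj hcard hx
    exact ⟨i, by rw [sElt_eq_svF hcard hk0 hlast i]; exact hi⟩
  obtain ⟨σ, hσ⟩ := exists_perm hNb hnd hlen hLonly
  have hbmem : bF hcard ∈ Finset.Nat.antidiagonalTuple k (n + 1 - k) := by
    refine Finset.Nat.mem_antidiagonalTuple.2 ?_
    have h2 := hNb
    rw [Finset.sum_add_distrib] at h2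
    simp only [Finset.sum_const, Finset.card_univ, Fintype.card_fin, smul_eq_mul, mul_one] at h2
    omega
  refine ⟨⟨⟨bF hcard, hbmem⟩, σ, TiS (bF hcard) hNb S L hLS hmemL hLonly⟩, ?_⟩
  apply Subtype.ext
  apply Subtype.ext
  exact assembleS_eq hNb S L hLS hmemL hLonly σ hσ

end UKRec


/-- `u(n,k) = k! ∑ u(b₁)⋯u(b_k)` summed over weak compositions `(b₁,…,b_k)` of
`n - k` into `k` nonnegative parts; stated here with ground set `[n+1]`
(so `n + 1` plays the role of `n ≥ 1` in the statement). -/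
theorem uk_recurrence (n k : ℕ) (hk : 1 ≤ k) (hkn : k ≤ n + 1) :
    uk n k = k.factorial *
      ∑ b ∈ Finset.Nat.antidiagonalTuple k (n + 1 - k), ∏ i, u (b i) := by
  classical
  letI : ∀ m, Fintype (SetOfNCLists m) := fun m => Fintype.ofFinite _
  have hbij : Function.Bijective (UKRec.Fmap (n := n) (k := k) hkn) :=
    ⟨UKRec.Fmap_inj hkn, UKRec.Fmap_surj hk hkn⟩
  have h1 : uk n k = Nat.card
      (Σ b : {b : Fin k → ℕ // b ∈ Finset.Nat.antidiagonalTuple k (n + 1 - k)},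
        Equiv.Perm (Fin k) × ∀ i, SetOfNCLists (b.1 i)) :=
    (Nat.card_congr (Equiv.ofBijective _ hbij)).symm
  have hterm : ∀ b : {b : Fin k → ℕ // b ∈ Finset.Nat.antidiagonalTuple k (n + 1 - k)},
      Fintype.card (Equiv.Perm (Fin k) × ∀ i, SetOfNCLists (b.1 i)) =
        k.factorial * ∏ i, u (b.1 i) := by
    intro b
    rw [Fintype.card_prod, Fintype.card_perm, Fintype.card_fin, Fintype.card_pi]
    congr 1
    refine Finset.prod_congr rfl fun i _ => ?_
    rw [u, Nat.card_eq_fintype_card]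
  rw [h1, Nat.card_eq_fintype_card, Fintype.card_sigma,
    Finset.sum_congr rfl (fun b _ => hterm b),
    Finset.sum_coe_sort (Finset.Nat.antidiagonalTuple k (n + 1 - k))
      (fun b => k.factorial * ∏ i, u (b i)),
    ← Finset.mul_sum]
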